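/- Label-neighbouring sensitivity (Lemma B.1, Case 1): Let C_Z > 0. For every n ≥ 2, every d ≥ 1, every β ∈ ℝ^d, and every pair of survival datasets D, D' of size n that satisfy the covariate bound C_Z and agree in all observed times and all covariate paths while differing in at most one censoring indicator, one has ‖ℓ̇(β; D) − ℓ̇(β; D')‖₂ ≤ 2 C_Z / n. Moreover, for every n ≥ 2 and d ≥ 1 there exists such a pair of datasets satisfying the covariate bound 1 (namely Z_1 ≡ e_1 and Z_j ≡ −e_1 for j ≥ 2, all Δ_j = 1 in D and Δ_1 flipped to 0 in D', with T_1 the smallest time) and β = 0 for which ‖ℓ̇(0; D) − ℓ̇(0; D')‖₂ = 2(n−1)/n² ≥ 1/n. Hence the sensitivity of the Cox score with respect to a single censoring indicator is of exact order 1/n. -/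

import Mathlib

open scoped BigOperators
open MeasureTheory Real
open scoped RealInnerProductSpace
noncomputable section

structure SurvData (n d : ℕ) where
  T : Fin n → ℝ
  Δ : Fin n → Bool
  Z : Fin n → ℝ → EuclideanSpace ℝ (Fin d)

namespace SurvData

variable {n d : ℕ}

/-- Observed times lie in `[0,1]`. -/
def valid (D : SurvData n d) : Prop := ∀ i, D.T i ∈ Set.Icc (0 : ℝ) 1

/-- Covariate bound: `‖Z_i(t)‖₂ ≤ C_Z` for all `i` and all `t ∈ [0,1]`. -/
def covBound (D : SurvData n d) (CZ : ℝ) : Prop :=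
  ∀ i, ∀ t ∈ Set.Icc (0 : ℝ) 1, ‖D.Z i t‖ ≤ CZ

def S0 (D : SurvData n d) (β : EuclideanSpace ℝ (Fin d)) (t : ℝ) : ℝ :=
  (n : ℝ)⁻¹ * ∑ j, if t ≤ D.T j then Real.exp ⟪β, D.Z j t⟫ else 0

def S1 (D : SurvData n d) (β : EuclideanSpace ℝ (Fin d)) (t : ℝ) :
    EuclideanSpace ℝ (Fin d) :=
  (n : ℝ)⁻¹ • ∑ j, if t ≤ D.T j then Real.exp ⟪β, D.Z j t⟫ • D.Z j t else 0

def Zbar (D : SurvData n d) (β : EuclideanSpace ℝ (Fin d)) (t : ℝ) :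
    EuclideanSpace ℝ (Fin d) :=
  (D.S0 β t)⁻¹ • D.S1 β t

/-- The Cox partial-likelihood score `ℓ̇(β; D)`. -/
def score (D : SurvData n d) (β : EuclideanSpace ℝ (Fin d)) :
    EuclideanSpace ℝ (Fin d) :=
  (n : ℝ)⁻¹ • ∑ i, if D.Δ i then D.Z i (D.T i) - D.Zbar β (D.T i) else 0

/-- Neighbouring datasets: they differ in at most one triple. -/
def Neighbor (D D' : SurvData n d) : Prop :=
  ∃ i0 : Fin n, ∀ i, i ≠ i0 → D.T i = D'.T i ∧ D.Δ i = D'.Δ i ∧ D.Z i = D'.Z i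

end SurvData

namespace SurvData

variable {n d : ℕ}

lemma Zbar_bound (D : SurvData n d) (hn : 0 < n) (hv : D.valid) {CZ : ℝ}
    (hC : D.covBound CZ) (β : EuclideanSpace ℝ (Fin d)) (i : Fin n) :
    ‖D.Zbar β (D.T i)‖ ≤ CZ := by
  set t := D.T i with ht
  have ht01 : t ∈ Set.Icc (0:ℝ) 1 := hv i
  have hS0pos : 0 < D.S0 β t := by
    unfold S0
    apply mul_pos (by positivity)
    apply Finset.sum_pos' (fun j _ => by positivity)
    exact ⟨i, Finset.mem_univ i, by simp [ht, Real.exp_pos]⟩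
  have hsum : ‖∑ j, if t ≤ D.T j then Real.exp ⟪β, D.Z j t⟫ • D.Z j t else 0‖
      ≤ (∑ j, if t ≤ D.T j then Real.exp ⟪β, D.Z j t⟫ else 0) * CZ := by
    rw [Finset.sum_mul]
    refine (norm_sum_le _ _).trans (Finset.sum_le_sum fun j _ => ?_)
    by_cases h : t ≤ D.T j
    · simp only [h, if_true, norm_smul, Real.norm_eq_abs,
        abs_of_pos (Real.exp_pos _)]
      exact mul_le_mul_of_nonneg_left (hC j t ht01) (Real.exp_pos _).le
    · simp [h]
  have hS1 : ‖D.S1 β t‖ ≤ D.S0 β t * CZ := by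
    unfold S1 S0
    rw [norm_smul, Real.norm_eq_abs, abs_of_nonneg (by positivity), mul_assoc]
    exact mul_le_mul_of_nonneg_left hsum (by positivity)
  unfold Zbar
  rw [norm_smul, Real.norm_eq_abs, abs_of_nonneg (by positivity)]
  calc (D.S0 β t)⁻¹ * ‖D.S1 β t‖ ≤ (D.S0 β t)⁻¹ * (D.S0 β t * CZ) :=
        mul_le_mul_of_nonneg_left hS1 (by positivity)
    _ = CZ := by field_simp

lemma score_sub (D D' : SurvData n d) (β : EuclideanSpace ℝ (Fin d)) (i0 : Fin n)
    (hT : D.T = D'.T) (hZ : D.Z = D'.Z) (hΔ : ∀ i, i ≠ i0 → D.Δ i = D'.Δ i) :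
    D.score β - D'.score β = (n:ℝ)⁻¹ •
      ((if D.Δ i0 then D.Z i0 (D.T i0) - D.Zbar β (D.T i0) else 0)
        - (if D'.Δ i0 then D.Z i0 (D.T i0) - D.Zbar β (D.T i0) else 0)) := by
  have hZbar : D'.Zbar β = D.Zbar β := by
    funext t
    unfold Zbar S0 S1
    rw [hT, hZ]
  have hterm : ∀ i, (if D'.Δ i then D'.Z i (D'.T i) - D'.Zbar β (D'.T i) else 0)
      = (if D'.Δ i then D.Z i (D.T i) - D.Zbar β (D.T i) else 0) := by
    intro i; rw [hT, hZ, hZbar]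
  unfold score
  rw [← smul_sub, ← Finset.sum_sub_distrib]
  congr 1
  rw [Finset.sum_eq_single i0]
  · rw [hterm]
  · intro i _ hi
    rw [hterm, hΔ i hi, sub_self]
  · simp

end SurvData

/-- Label-neighbouring datasets: same times and covariate paths, at most one
censoring indicator differs. -/
def SurvData.LabelNeighbor {n d : ℕ} (D D' : SurvData n d) : Prop :=
  D.T = D'.T ∧ D.Z = D'.Z ∧ ∃ i0 : Fin n, ∀ i, i ≠ i0 → D.Δ i = D'.Δ i

/-- Lemma B.1 (Case 1): the sensitivity of the Cox score with respect to a single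
censoring indicator is of exact order `1/n`: the upper bound `2 C_Z / n` always
holds, and it is attained (up to constants) by the pair with `Z_1 ≡ e_1`,
`Z_j ≡ −e_1` for `j ≥ 2`, all `Δ_j = 1` in `D`, `Δ_1` flipped to `0` in `D'`,
`T_1` the smallest time and `β = 0`, which gives value exactly `2(n−1)/n² ≥ 1/n`. -/

theorem cox_score_label_sensitivity (CZ : ℝ) (hCZ : 0 < CZ) :
    (∀ (n d : ℕ), 2 ≤ n → 1 ≤ d → ∀ β : EuclideanSpace ℝ (Fin d),
      ∀ D D' : SurvData n d, D.valid → D'.valid → D.covBound CZ → D'.covBound CZ →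
        SurvData.LabelNeighbor D D' →
        ‖D.score β - D'.score β‖ ≤ 2 * CZ / n) ∧
    (∀ (n d : ℕ) (hn : 2 ≤ n) (hd : 1 ≤ d),
      ∃ D D' : SurvData n d,
        D.valid ∧ D'.valid ∧ D.covBound 1 ∧ D'.covBound 1 ∧
        SurvData.LabelNeighbor D D' ∧
        (∀ t : ℝ, D.Z ⟨0, by omega⟩ t = EuclideanSpace.single (⟨0, hd⟩ : Fin d) (1 : ℝ)) ∧
        (∀ i : Fin n, i ≠ ⟨0, by omega⟩ → ∀ t : ℝ,
          D.Z i t = -EuclideanSpace.single (⟨0, hd⟩ : Fin d) (1 : ℝ)) ∧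
        (∀ i : Fin n, D.Δ i = true) ∧
        D'.Δ ⟨0, by omega⟩ = false ∧
        (∀ i : Fin n, i ≠ ⟨0, by omega⟩ → D.T ⟨0, by omega⟩ < D.T i) ∧
        ‖D.score 0 - D'.score 0‖ = 2 * (n - 1) / (n : ℝ) ^ 2 ∧
        (1 : ℝ) / n ≤ 2 * (n - 1) / (n : ℝ) ^ 2) := by
  constructor
  · rintro n d hn hd β D D' hvD hvD' hCD hCD' ⟨hT, hZ, i0, hΔ⟩
    have hn0 : 0 < n := by omega
    rw [SurvData.score_sub D D' β i0 hT hZ hΔ]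
    have hw : ‖D.Z i0 (D.T i0) - D.Zbar β (D.T i0)‖ ≤ 2 * CZ := by
      calc ‖D.Z i0 (D.T i0) - D.Zbar β (D.T i0)‖
          ≤ ‖D.Z i0 (D.T i0)‖ + ‖D.Zbar β (D.T i0)‖ := norm_sub_le _ _
        _ ≤ CZ + CZ := add_le_add (hCD i0 _ (hvD i0)) (D.Zbar_bound hn0 hvD hCD β i0)
        _ = 2 * CZ := by ring
    have hdiff : ‖(if D.Δ i0 then D.Z i0 (D.T i0) - D.Zbar β (D.T i0) else 0)
        - (if D'.Δ i0 then D.Z i0 (D.T i0) - D.Zbar β (D.T i0) else 0)‖ ≤ 2 * CZ := by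
      rcases Bool.eq_false_or_eq_true (D.Δ i0) with h1 | h1 <;>
        rcases Bool.eq_false_or_eq_true (D'.Δ i0) with h2 | h2 <;>
        rw [h1, h2] <;>
        simp only [Bool.false_eq_true, if_true, if_false, zero_sub, sub_zero, sub_self, norm_neg, norm_zero] <;>
        first | exact hw | positivity
    rw [norm_smul, Real.norm_eq_abs, abs_of_nonneg (by positivity)]
    calc ((n:ℝ))⁻¹ * ‖_‖ ≤ ((n:ℝ))⁻¹ * (2 * CZ) :=
          mul_le_mul_of_nonneg_left hdiff (by positivity)
      _ = 2 * CZ / n := by field_simp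
  · intro n d hn hd
    have hnn : (0:ℕ) < n := by omega
    have h2n : (2:ℝ) ≤ (n:ℝ) := by exact_mod_cast hn
    have hnR : (0:ℝ) < n := by linarith
    set z0 : Fin n := ⟨0, by omega⟩ with hz0def
    set e1 : EuclideanSpace ℝ (Fin d) := EuclideanSpace.single (⟨0, hd⟩ : Fin d) (1 : ℝ)
      with he1
    have hne1 : ‖e1‖ = 1 := by rw [he1, EuclideanSpace.norm_single]; norm_num
    set Tf : Fin n → ℝ := fun i => if i = z0 then 0 else 1 with hTf
    set Zf : Fin n → ℝ → EuclideanSpace ℝ (Fin d) := fun i _ => if i = z0 then e1 else -e1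
      with hZf
    set D : SurvData n d := ⟨Tf, fun _ => true, Zf⟩ with hD
    set D' : SurvData n d := ⟨Tf, fun i => if i = z0 then false else true, Zf⟩ with hD'
    have hcond : ∀ j : Fin n, (0:ℝ) ≤ Tf j := by
      intro j; by_cases h : j = z0 <;> simp [hTf, h]
    have hS0 : D.S0 0 0 = 1 := by
      unfold SurvData.S0
      simp only [hD, inner_zero_left, Real.exp_zero]
      rw [Finset.sum_congr rfl (fun j _ => if_pos (hcond j))]
      simp [Finset.card_univ]
      field_simp
    have hsum : ∑ j : Fin n, Zf j 0 = ((2:ℝ) - n) • e1 := by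
      have hrw : ∀ j : Fin n, Zf j 0 = (if j = z0 then e1 + e1 else 0) + (-e1) := by
        intro j; by_cases h : j = z0 <;> simp [hZf, h]
      rw [Finset.sum_congr rfl (fun j _ => hrw j)]
      rw [Finset.sum_add_distrib, Finset.sum_ite_eq' Finset.univ z0 (fun _ => e1 + e1)]
      simp only [Finset.mem_univ, if_true, Finset.sum_const, Finset.card_univ,
        Fintype.card_fin, smul_neg]
      rw [← Nat.cast_smul_eq_nsmul ℝ, sub_smul, two_smul]
      abel
    have hS1 : D.S1 0 0 = (((2:ℝ) - n) / n) • e1 := by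
      unfold SurvData.S1
      simp only [hD, inner_zero_left, Real.exp_zero, one_smul]
      rw [Finset.sum_congr rfl (fun j _ => if_pos (hcond j))]
      rw [hsum, smul_smul]
      congr 1
      field_simp
    have hZbar : D.Zbar 0 0 = (((2:ℝ) - n) / n) • e1 := by
      unfold SurvData.Zbar
      rw [hS0, hS1]; simp
    have hTz0 : D.T z0 = 0 := by simp [hD, hTf]
    have hΔeq : ∀ i : Fin n, i ≠ z0 → D.Δ i = D'.Δ i := by
      intro i hi; simp [hD, hD', hi]
    have hscore : D.score 0 - D'.score 0 =
        ((n:ℝ))⁻¹ • (e1 - (((2:ℝ) - n) / n) • e1) := by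
      rw [SurvData.score_sub D D' 0 z0 rfl rfl hΔeq]
      have hDz0 : D.Δ z0 = true := rfl
      have hD'z0 : D'.Δ z0 = false := by simp [hD']
      rw [hDz0, hD'z0]
      simp only [if_true, Bool.false_eq_true, if_false, sub_zero]
      have hT0 : Tf z0 = 0 := by simp [hTf]
      rw [hTz0, hZbar]
      have : D.Z z0 0 = e1 := by simp [hD, hZf]
      rw [this]
    have hval : ‖D.score 0 - D'.score 0‖ = 2 * ((n:ℝ) - 1) / (n:ℝ) ^ 2 := by
      rw [hscore]
      have : e1 - (((2:ℝ) - n) / n) • e1 = ((1:ℝ) - ((2:ℝ) - n) / n) • e1 := by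
        rw [sub_smul, one_smul]
      rw [this, smul_smul, norm_smul, hne1, mul_one, Real.norm_eq_abs]
      have hc : (n:ℝ)⁻¹ * ((1:ℝ) - ((2:ℝ) - n) / n) = 2 * ((n:ℝ) - 1) / (n:ℝ) ^ 2 := by
        field_simp; ring
      rw [hc, abs_of_nonneg (div_nonneg (by nlinarith) (by positivity))]
    refine ⟨D, D', ?_, ?_, ?_, ?_, ?_, ?_, ?_, ?_, ?_, ?_, hval, ?_⟩
    · intro i; by_cases h : i = z0 <;> simp [hD, hTf, h] <;> norm_num
    · intro i; by_cases h : i = z0 <;> simp [hD', hTf, h] <;> norm_num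
    · intro i t _; by_cases h : i = z0 <;> simp [hD, hZf, h, hne1]
    · intro i t _; by_cases h : i = z0 <;> simp [hD', hZf, h, hne1]
    · exact ⟨rfl, rfl, z0, hΔeq⟩
    · intro t; simp [hD, hZf, he1]
    · intro i hi t; simp [hD, hZf, hi, he1]
    · intro i; rfl
    · simp [hD']
    · intro i hi; simp [hD, hTf, hi]
    · rw [div_le_div_iff₀ hnR (by positivity)]
      nlinarith
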